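/- arXiv:2005.01240 — 3 statements merged into one kernel-verified Lean document; each statement's English description precedes it below -/
import Mathlib

section
/- Let A be an n×n positive definite Hermitian matrix. A Hermitian matrix B satisfies det(sA + B) > 0 for all s ≥ 0 if and only if B is positive definite. In other words, the Gårding cone of the determinant at A consists exactly of the positive definite Hermitian matrices. -/
open Matrix ComplexOrder
open scoped MatrixOrder

/-- Conjugating a positive definite matrix by an invertible matrix preserves
positive definiteness. -/
lemma posDef_conj_aux {n : ℕ} {M C : Matrix (Fin n) (Fin n) ℂ} (hM : M.PosDef)
    (hC : IsUnit C) : (Cᴴ * M * C).PosDef := by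
  refine Matrix.PosDef.of_dotProduct_mulVec_pos ?_ ?_
  · exact Matrix.isHermitian_conjTranspose_mul_mul C hM.1
  · intro x hx
    have hCx : C *ᵥ x ≠ 0 := by
      intro h
      apply hx
      have hinj : Function.Injective C.mulVec := Matrix.mulVec_injective_iff_isUnit.mpr hC
      have : C *ᵥ x = C *ᵥ 0 := by simpa using h
      exact hinj this
    simpa only [star_mulVec, dotProduct_mulVec, vecMul_vecMul] using hM.dotProduct_mulVec_pos hCx

/-- for a positive definite Hermitian `A`, a Hermitian matrix `B` satisfies
`det (s A + B) > 0` for all `s ≥ 0` iff `B` is positive definite (the Gårding cone of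
`det` at `A` consists of the positive definite Hermitian matrices). -/
theorem stmt4 (n : ℕ) (A B : Matrix (Fin n) (Fin n) ℂ)
    (hA : A.PosDef) (hB : B.IsHermitian) :
    (∀ s : ℝ, 0 ≤ s →
        0 < ((s : ℂ) • A + B).det.re ∧ ((s : ℂ) • A + B).det.im = 0) ↔ B.PosDef := by
  classical
  set S := CFC.sqrt A with hSdef
  have hS : S.PosSemidef := (CFC.sqrt_nonneg A).posSemidef
  have hSS : S * S = A := CFC.sqrt_mul_sqrt_self A hA.posSemidef.nonneg
  have hAdet : A.det ≠ 0 := hA.det_pos.ne'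
  have hdetS : IsUnit S.det := by
    refine isUnit_iff_ne_zero.mpr ?_
    intro h
    apply hAdet
    rw [← hSS, Matrix.det_mul, h, mul_zero]
  have hSunit : IsUnit S := (Matrix.isUnit_iff_isUnit_det S).mpr hdetS
  have h1 : S * S⁻¹ = 1 := Matrix.mul_nonsing_inv _ hdetS
  have h2 : S⁻¹ * S = 1 := Matrix.nonsing_inv_mul _ hdetS
  set M := S⁻¹ * B * S⁻¹ with hMdef
  have hSinv : S⁻¹.IsHermitian := hS.1.inv
  have hM : M.IsHermitian := by
    show (S⁻¹ * B * S⁻¹)ᴴ = S⁻¹ * B * S⁻¹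
    rw [Matrix.conjTranspose_mul, Matrix.conjTranspose_mul, hSinv.eq, hB.eq, Matrix.mul_assoc]
  have h3 : S * M * S = B := by
    calc S * (S⁻¹ * B * S⁻¹) * S
        = S * S⁻¹ * B * (S⁻¹ * S) := by simp only [Matrix.mul_assoc]
      _ = B := by rw [h1, h2, Matrix.one_mul, Matrix.mul_one]
  have key : ∀ s : ℝ, (s : ℂ) • A + B = S * ((s : ℂ) • 1 + M) * S := by
    intro s
    rw [Matrix.mul_add, Matrix.add_mul, h3, mul_smul_comm, Matrix.mul_one, smul_mul_assoc, hSS]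
  -- determinant of `(s : ℂ) • 1 + M` via the spectral theorem
  set U : Matrix (Fin n) (Fin n) ℂ := (hM.eigenvectorUnitary : Matrix (Fin n) (Fin n) ℂ)
    with hUdef
  have hUunit : U * star U = 1 := Matrix.mem_unitaryGroup_iff.mp hM.eigenvectorUnitary.2
  have hUunit' : star U * U = 1 := Matrix.mem_unitaryGroup_iff'.mp hM.eigenvectorUnitary.2
  have detM : ∀ s : ℝ, ((s : ℂ) • 1 + M).det
      = ∏ i, ((s : ℂ) + (hM.eigenvalues i : ℂ)) := by
    intro s
    have hdiag : (s : ℂ) • (1 : Matrix (Fin n) (Fin n) ℂ)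
        + Matrix.diagonal (RCLike.ofReal ∘ hM.eigenvalues)
        = Matrix.diagonal (fun i => (s : ℂ) + (hM.eigenvalues i : ℂ)) := by
      rw [Matrix.smul_one_eq_diagonal, Matrix.diagonal_add]
      rfl
    have hsplit : (s : ℂ) • (1 : Matrix (Fin n) (Fin n) ℂ) + M
        = U * ((s : ℂ) • 1 + Matrix.diagonal (RCLike.ofReal ∘ hM.eigenvalues)) * star U := by
      rw [Matrix.mul_add, Matrix.add_mul, ← (show M = U * Matrix.diagonal (RCLike.ofReal ∘ hM.eigenvalues) * star U from hM.spectral_theorem)]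
      congr 1
      rw [mul_smul_comm, Matrix.mul_one, smul_mul_assoc, hUunit]
    rw [hsplit, Matrix.det_mul_right_comm, hUunit, Matrix.one_mul, hdiag, Matrix.det_diagonal]
  have detkey : ∀ s : ℝ, ((s : ℂ) • A + B).det
      = A.det * ∏ i, ((s : ℂ) + (hM.eigenvalues i : ℂ)) := by
    intro s
    rw [key s, Matrix.det_mul, Matrix.det_mul, detM s, ← hSS, Matrix.det_mul]
    ring
  constructor
  · intro h
    -- all eigenvalues of M are positive
    have hev : ∀ i, 0 < hM.eigenvalues i := by
      intro i
      by_contra hle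
      push_neg at hle
      have hs : (0 : ℝ) ≤ -hM.eigenvalues i := by linarith
      obtain ⟨hre, _⟩ := h _ hs
      have hzero : (∏ j, (((-hM.eigenvalues i : ℝ) : ℂ) + (hM.eigenvalues j : ℂ))) = 0 := by
        apply Finset.prod_eq_zero (Finset.mem_univ i)
        push_cast
        ring
      rw [detkey, hzero, mul_zero] at hre
      simp at hre
    -- hence M is positive definite
    have hD : (Matrix.diagonal (RCLike.ofReal ∘ hM.eigenvalues) :
        Matrix (Fin n) (Fin n) ℂ).PosDef := by
      refine Matrix.posDef_diagonal_iff.mpr fun i => ?_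
      have := hev i
      simp only [Function.comp_apply]
      exact RCLike.ofReal_pos.mpr this
    have hUinv : IsUnit (star U) := by
      refine (Matrix.isUnit_iff_isUnit_det _).mpr (IsUnit.of_mul_eq_one U.det ?_)
      rw [← Matrix.det_mul, hUunit', Matrix.det_one]
    have hspec : M = U * Matrix.diagonal (RCLike.ofReal ∘ hM.eigenvalues) * star U :=
      hM.spectral_theorem
    have hMpd : M.PosDef := by
      have h4 := posDef_conj_aux hD hUinv
      have h5 : (star U)ᴴ = U := by
        rw [Matrix.star_eq_conjTranspose, Matrix.conjTranspose_conjTranspose]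
      rw [h5, ← hspec] at h4
      exact h4
    have hBpd : (Sᴴ * M * S).PosDef := posDef_conj_aux hMpd hSunit
    rw [hS.1.eq, h3] at hBpd
    exact hBpd
  · intro hBpd
    intro s hs
    -- M is positive definite since B is
    have hMpd : M.PosDef := by
      have hSinvU : IsUnit S⁻¹ :=
        (Matrix.isUnit_iff_isUnit_det _).mpr (by simpa [Matrix.det_nonsing_inv] using hdetS.unit⁻¹.isUnit)
      have := posDef_conj_aux hBpd hSinvU
      rw [hSinv.eq] at this
      exact this
    have hev : ∀ i, 0 < hM.eigenvalues i := hMpd.eigenvalues_pos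
    -- the product of the eigenvalue factors is a positive real
    have hprod : (∏ i, ((s : ℂ) + (hM.eigenvalues i : ℂ)))
        = ((∏ i, (s + hM.eigenvalues i) : ℝ) : ℂ) := by
      push_cast
      rfl
    have hppos : (0 : ℝ) < ∏ i, (s + hM.eigenvalues i) :=
      Finset.prod_pos fun i _ => by have := hev i; linarith
    have hdetpos : 0 < ((s : ℂ) • A + B).det := by
      rw [detkey s, hprod]
      have h1 : (0 : ℂ) < A.det := hA.det_pos
      have h2 : (0 : ℂ) < ((∏ i, (s + hM.eigenvalues i) : ℝ) : ℂ) := by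
        exact_mod_cast hppos
      exact mul_pos h1 h2
    rw [Complex.lt_def] at hdetpos
    exact ⟨by simpa using hdetpos.1, by simpa using hdetpos.2.symm⟩
end

section
/- Let A, B be positive definite n×n Hermitian matrices and define a_k = D(A^{[k]}, B^{[n-k]}), the mixed determinant with A repeated k times and B repeated n−k times. Then a_k² ≥ a_{k-1} a_{k+1} for all 1 ≤ k ≤ n−1. -/
open Matrix ComplexOrder

/-- The mixed determinant (full polarization of `det`, normalized so that
`mixedDet (fun _ => A) = det A`). -/
noncomputable def mixedDet {n : ℕ} (A : Fin n → Matrix (Fin n) (Fin n) ℂ) : ℂ :=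
  (n.factorial : ℂ)⁻¹ *
    ∑ σ : Equiv.Perm (Fin n), Matrix.det (Matrix.of fun i j => A (σ j) i j)

namespace Stmt16Aux

/-- elementary symmetric functions of a list of reals -/
def esym : List ℝ → ℕ → ℝ
  | _, 0 => 1
  | [], _+1 => 0
  | a :: l, k+1 => esym l (k+1) + a * esym l k

@[simp] lemma esym_zero (l : List ℝ) : esym l 0 = 1 := by cases l <;> rfl
@[simp] lemma esym_nil_succ (k : ℕ) : esym [] (k+1) = 0 := rfl
lemma esym_cons (a : ℝ) (l : List ℝ) (k : ℕ) :
    esym (a::l) (k+1) = esym l (k+1) + a * esym l k := rfl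

lemma esym_eq_zero : ∀ {l : List ℝ} {k : ℕ}, l.length < k → esym l k = 0
  | _, 0, h => by omega
  | [], k+1, _ => rfl
  | a :: l, k+1, h => by
      have h1 : l.length < k := by simpa using h
      rw [esym_cons, esym_eq_zero (Nat.lt_succ_of_lt h1), esym_eq_zero h1]
      ring

lemma esym_nonneg : ∀ {l : List ℝ}, (∀ x ∈ l, 0 ≤ x) → ∀ (k : ℕ), 0 ≤ esym l k
  | _, _, 0 => by simp
  | [], _, k+1 => by simp
  | a :: l, h, k+1 => by
      have ha : 0 ≤ a := h a List.mem_cons_self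
      have h' : ∀ x ∈ l, 0 ≤ x := fun x hx => h x (List.mem_cons_of_mem _ hx)
      rw [esym_cons]
      have := esym_nonneg h' (k+1)
      have := esym_nonneg h' k
      positivity

lemma esym_pos : ∀ {l : List ℝ}, (∀ x ∈ l, 0 < x) → ∀ {k : ℕ}, k ≤ l.length → 0 < esym l k
  | _, _, 0, _ => by simp
  | [], _, k+1, h => by simp at h
  | a :: l, h, k+1, hk => by
      have ha : 0 < a := h a List.mem_cons_self
      have h' : ∀ x ∈ l, 0 < x := fun x hx => h x (List.mem_cons_of_mem _ hx)
      have hk' : k ≤ l.length := by simpa using hk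
      have h2 : 0 < a * esym l k := mul_pos ha (esym_pos h' hk')
      have h1 : 0 ≤ esym l (k+1) := esym_nonneg (fun x hx => (h' x hx).le) _
      rw [esym_cons]; linarith

lemma esym_prod (x : ℝ) : ∀ (l : List ℝ),
    (l.map (fun a => x * a + 1)).prod
      = ∑ k ∈ Finset.range (l.length + 1), esym l k * x ^ k
  | [] => by simp
  | a :: l => by
      have IH := esym_prod x l
      have key : ∑ k ∈ Finset.range (l.length + 1), esym l k * x ^ k
          = (∑ k ∈ Finset.range (l.length + 1), esym l (k+1) * x ^ (k+1)) + 1 := by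
        rw [Finset.sum_range_succ' (f := fun k => esym l k * x ^ k),
          Finset.sum_range_succ (f := fun k => esym l (k+1) * x ^ (k+1)),
          esym_eq_zero (by omega : l.length < l.length + 1)]
        simp
      have hS : x * a * (∑ k ∈ Finset.range (l.length + 1), esym l k * x ^ k)
          = ∑ k ∈ Finset.range (l.length + 1), a * esym l k * x ^ (k+1) := by
        rw [Finset.mul_sum]; exact Finset.sum_congr rfl (fun k _ => by ring)
      simp only [List.map_cons, List.prod_cons, IH, List.length_cons]
      rw [Finset.sum_range_succ' (f := fun k => esym (a::l) k * x ^ k)]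
      simp only [esym_cons, esym_zero, pow_zero, mul_one, add_mul]
      rw [Finset.sum_add_distrib]
      linear_combination key + hS


/-- normalized elementary symmetric means -/
noncomputable def p (l : List ℝ) (k : ℕ) : ℝ := ((l.length.choose k : ℝ))⁻¹ * esym l k

@[simp] lemma p_zero (l : List ℝ) : p l 0 = 1 := by simp [p, esym_zero]

lemma p_eq_zero {l : List ℝ} {k : ℕ} (h : l.length < k) : p l k = 0 := by
  simp [p, esym_eq_zero h]

lemma p_nonneg {l : List ℝ} (h : ∀ x ∈ l, 0 ≤ x) (k : ℕ) : 0 ≤ p l k := by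
  have := esym_nonneg h k
  have : (0:ℝ) ≤ ((l.length.choose k : ℝ))⁻¹ := by positivity
  unfold p
  exact mul_nonneg this (esym_nonneg h k)

lemma p_pos {l : List ℝ} (h : ∀ x ∈ l, 0 < x) {k : ℕ} (hk : k ≤ l.length) : 0 < p l k := by
  have h1 : 0 < esym l k := esym_pos h hk
  have h2 : 0 < (l.length.choose k : ℝ) := by
    exact_mod_cast Nat.cast_pos.mpr (Nat.choose_pos hk)
  exact mul_pos (by positivity) h1

lemma p_rec_succ (a : ℝ) (l : List ℝ) (k : ℕ) :
    ((l.length + 1 : ℝ)) * p (a::l) (k+1)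
      = ((l.length + 1 : ℝ) - (k+1)) * p l (k+1) + (k+1) * a * p l k := by
  have hlen : (a::l).length = l.length + 1 := by simp
  rcases lt_trichotomy k l.length with hk | hk | hk
  · -- main case : k + 1 ≤ l.length
    have c0 : (0:ℝ) < (l.length.choose k : ℝ) := by exact_mod_cast Nat.choose_pos (by omega)
    have c1 : (0:ℝ) < (l.length.choose (k+1) : ℝ) := by exact_mod_cast Nat.choose_pos (by omega)
    have c : (0:ℝ) < ((l.length+1).choose (k+1) : ℝ) := by
      exact_mod_cast Nat.choose_pos (by omega)
    have id2 : ((l.length+1 : ℝ)) * (l.length.choose k : ℝ)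
        = ((l.length+1).choose (k+1) : ℝ) * (k+1) := by
      exact_mod_cast congrArg (Nat.cast : ℕ → ℝ) (Nat.add_one_mul_choose_eq l.length k)
    have pas : ((l.length+1).choose (k+1) : ℝ)
        = (l.length.choose k : ℝ) + (l.length.choose (k+1) : ℝ) := by
      exact_mod_cast congrArg (Nat.cast : ℕ → ℝ) (Nat.choose_succ_succ l.length k)
    have id1 : ((l.length+1 : ℝ)) * (l.length.choose (k+1) : ℝ)
        = ((l.length+1 : ℝ) - (k+1)) * ((l.length+1).choose (k+1) : ℝ) := by
      nlinarith [id2, pas]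
    unfold p
    rw [hlen, esym_cons]
    field_simp
    linear_combination (esym l (k+1) * ((l.length.choose k : ℝ))) * id1
      + (a * esym l k * ((l.length.choose (k+1) : ℝ))) * id2
  · -- k = l.length
    have e1 : esym l (k+1) = 0 := esym_eq_zero (by omega)
    unfold p
    rw [hlen, esym_cons, e1, hk, Nat.choose_self]
    simp [hk]
    ring
  · -- k > l.length : everything vanishes
    have e0 : esym l k = 0 := esym_eq_zero (by omega)
    have e1 : esym l (k+1) = 0 := esym_eq_zero (by omega)
    have e2 : esym (a::l) (k+1) = 0 := esym_eq_zero (by rw [hlen]; omega)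
    unfold p
    rw [e0, e1, e2]
    ring


/-- the core algebraic certificate -/
lemma key (nn a q r s t k : ℝ) (hk : 0 ≤ k) (hc : k + 2 ≤ nn) (ha : 0 ≤ a)
    (hq : 0 ≤ q) (hr : 0 ≤ r) (hs : 0 ≤ s) (ht : 0 ≤ t)
    (h1 : r * t ≤ s ^ 2) (h2 : q * t ≤ r * s) (h3 : q * s ≤ r ^ 2) :
    ((nn - k) * r + k * a * q) * ((nn - (k+2)) * t + (k+2) * a * s)
      ≤ ((nn - (k+1)) * s + (k+1) * a * r) ^ 2 := by
  nlinarith [mul_nonneg (mul_nonneg (by linarith : (0:ℝ) ≤ nn - k) (by linarith : (0:ℝ) ≤ nn - k - 2)) (sub_nonneg.2 h1),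
    mul_nonneg (mul_nonneg (mul_nonneg hk (by linarith : (0:ℝ) ≤ nn - k - 2)) ha) (sub_nonneg.2 h2),
    mul_nonneg (mul_nonneg (mul_nonneg hk (by linarith : (0:ℝ) ≤ k + 2)) (mul_nonneg ha ha)) (sub_nonneg.2 h3),
    sq_nonneg (s - a * r)]

lemma chain {l : List ℝ} (h : ∀ x ∈ l, 0 < x)
    (hN : ∀ k, p l k * p l (k+2) ≤ p l (k+1) ^ 2) (j : ℕ) :
    p l j * p l (j+3) ≤ p l (j+1) * p l (j+2) := by
  by_cases hj : j + 3 ≤ l.length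
  · have hq := p_pos h (show j ≤ l.length by omega)
    have hr := p_pos h (show j+1 ≤ l.length by omega)
    have hs := p_pos h (show j+2 ≤ l.length by omega)
    have ht := p_pos h (show j+3 ≤ l.length by omega)
    have h1 := hN j
    have h2 := hN (j+1)
    have hrs : 0 < p l (j+1) * p l (j+2) := mul_pos hr hs
    refine le_of_mul_le_mul_right ?_ hrs
    have := mul_le_mul h1 (by simpa [show j+1+1 = j+2 by ring, show j+1+2 = j+3 by ring] using h2)
      (by positivity) (by positivity)
    nlinarith [this]
  · rw [p_eq_zero (show l.length < j + 3 by omega)]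
    have := p_nonneg (fun x hx => (h x hx).le)
    nlinarith [this (j+1), this (j+2), this j]

theorem newton : ∀ (l : List ℝ), (∀ x ∈ l, 0 < x) →
    ∀ (k : ℕ), p l k * p l (k+2) ≤ p l (k+1) ^ 2
  | [], h, k => by
      rw [p_eq_zero (show ([] : List ℝ).length < k + 2 by simp)]
      have := p_nonneg (l := ([] : List ℝ)) (by simp) (k+1)
      nlinarith [p_nonneg (l := ([] : List ℝ)) (by simp) k]
  | a :: l, h, k => by
      have ha : 0 < a := h a List.mem_cons_self
      have h' : ∀ x ∈ l, 0 < x := fun x hx => h x (List.mem_cons_of_mem _ hx)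
      have IH := newton l h'
      have hnn : (0:ℝ) < (l.length + 1 : ℝ) := by positivity
      by_cases htop : k + 2 ≤ l.length + 1
      swap
      · rw [p_eq_zero (show (a::l).length < k + 2 by simp; omega)]
        have hnn' := p_nonneg (fun x hx => (h x hx).le)
        nlinarith [hnn' k, hnn' (k+1)]
      · -- main case
        have hge : p l k * p l (k+2) ≤ p l (k+1)^2 := IH k
        have hnng := p_nonneg (fun x hx => (h' x hx).le)
        -- set q according to k
        obtain ⟨q, hq0, hreck, h2, h3⟩ :
            ∃ q : ℝ, 0 ≤ q ∧
              ((l.length + 1 : ℝ)) * p (a::l) k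
                = ((l.length + 1 : ℝ) - k) * p l k + k * a * q ∧
              q * p l (k+2) ≤ p l k * p l (k+1) ∧
              q * p l (k+1) ≤ p l k ^ 2 := by
          rcases k with _ | j
          · refine ⟨0, le_rfl, ?_, ?_, ?_⟩
            · simp [p_zero]
            · simpa using mul_nonneg (hnng 0) (hnng 1)
            · simpa using sq_nonneg (p l 0)
          · refine ⟨p l j, hnng j, ?_, ?_, ?_⟩
            · exact_mod_cast p_rec_succ a l j
            · have := chain h' IH j
              simpa [show j+1+2 = j+3 by ring, show j+1+1 = j+2 by ring] using this
            · have := IH j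
              simpa [show j+1+1 = j+2 by ring] using this
        have hrec1 := p_rec_succ a l k
        have hrec2 := p_rec_succ a l (k+1)
        have hkey := key (l.length + 1 : ℝ) a q (p l k) (p l (k+1)) (p l (k+2)) (k : ℝ)
          (by positivity) (by exact_mod_cast htop) ha.le hq0 (hnng k) (hnng (k+1)) (hnng (k+2))
          hge h2 h3
        have expand : ((l.length + 1 : ℝ)) * p (a::l) k * (((l.length + 1 : ℝ)) * p (a::l) (k+2))
            ≤ (((l.length + 1 : ℝ)) * p (a::l) (k+1)) ^ 2 := by
          rw [hreck, hrec1, hrec2]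
          convert hkey using 2 <;> push_cast <;> ring
        rw [show ((l.length + 1 : ℝ)) * p (a::l) k * (((l.length + 1 : ℝ)) * p (a::l) (k+2))
            = ((l.length + 1 : ℝ))^2 * (p (a::l) k * p (a::l) (k+2)) by ring,
          show (((l.length + 1 : ℝ)) * p (a::l) (k+1)) ^ 2
            = ((l.length + 1 : ℝ))^2 * (p (a::l) (k+1) ^ 2) by ring] at expand
        exact (mul_le_mul_iff_right₀ (by positivity)).mp expand


variable {n : ℕ}

/-- matrix whose columns in `S` come from `A`, others from `B` -/
def mixCol (A B : Matrix (Fin n) (Fin n) ℂ) (S : Finset (Fin n)) : Matrix (Fin n) (Fin n) ℂ :=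
  Matrix.of fun i j => if j ∈ S then A i j else B i j

lemma det_smul_add_expand (A B : Matrix (Fin n) (Fin n) ℂ) (x : ℂ) :
    det (x • A + B) = ∑ S : Finset (Fin n), x ^ S.card * det (mixCol A B S) := by
  have h0 : det (x • A + B) = det (x • Aᵀ + Bᵀ) := by
    rw [← det_transpose, transpose_add, transpose_smul]
  rw [h0]
  have h1 : (x • Aᵀ + Bᵀ) = ((fun i => x • Aᵀ i) + fun i => Bᵀ i : Fin n → Fin n → ℂ) := by
    ext i j; simp
  rw [h1]
  show (detRowAlternating : (Fin n → ℂ) [⋀^Fin n]→ₗ[ℂ] ℂ).toMultilinearMap _ = _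
  rw [MultilinearMap.map_add_univ]
  refine Finset.sum_congr rfl fun S _ => ?_
  have h2 : S.piecewise (fun i => x • Aᵀ i) (fun i => Bᵀ i)
      = S.piecewise (fun i => x • (S.piecewise Aᵀ Bᵀ) i) (S.piecewise Aᵀ Bᵀ) := by
    ext i j
    by_cases hi : i ∈ S <;>
      simp [Finset.piecewise_eq_of_mem, Finset.piecewise_eq_of_notMem, Finset.piecewise, hi]
  rw [h2]
  rw [MultilinearMap.map_piecewise_smul]
  have h3 : (detRowAlternating : (Fin n → ℂ) [⋀^Fin n]→ₗ[ℂ] ℂ).toMultilinearMap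
        (S.piecewise Aᵀ Bᵀ) = det (mixCol A B S) := by
    have : S.piecewise Aᵀ Bᵀ = (mixCol A B S)ᵀ := by
      ext i j
      by_cases hi : i ∈ S <;> simp [Finset.piecewise, hi, mixCol, transpose]
    show det (S.piecewise Aᵀ Bᵀ) = _
    rw [this, det_transpose]
  rw [h3]
  simp [Finset.prod_const, smul_eq_mul]


lemma card_filter_lt (k : ℕ) (hk : k ≤ n) :
    (Finset.univ.filter fun i : Fin n => (i : ℕ) < k).card = k := by
  rw [← Fintype.card_subtype]
  have e : {i : Fin n // (i : ℕ) < k} ≃ Fin k :=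
    { toFun := fun x => ⟨x.1.1, x.2⟩
      invFun := fun y => ⟨⟨y.1, lt_of_lt_of_le y.2 hk⟩, y.2⟩
      left_inv := fun x => by ext; rfl
      right_inv := fun y => by ext; rfl }
  rw [Fintype.card_congr e, Fintype.card_fin]

/-- the number of permutations with `σ ⁻¹ T = S` -/
lemma fiber_card (S T : Finset (Fin n)) (hST : S.card = T.card) :
    (Finset.univ.filter fun σ : Equiv.Perm (Fin n) => ∀ j, σ j ∈ T ↔ j ∈ S).card
      = S.card.factorial * (n - S.card).factorial := by
  classical
  rw [← Fintype.card_subtype]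
  have e : {σ : Equiv.Perm (Fin n) // ∀ j, σ j ∈ T ↔ j ∈ S}
      ≃ ({j // j ∈ S} ≃ {i // i ∈ T}) × ({j // j ∉ S} ≃ {i // i ∉ T}) :=
    { toFun := fun σh =>
        (Equiv.subtypeEquiv σh.1 fun a => (σh.2 a).symm,
         Equiv.subtypeEquiv σh.1 fun a => not_congr (σh.2 a).symm)
      invFun := fun ee =>
        ⟨((Equiv.sumCompl (· ∈ S)).symm.trans
            ((ee.1.sumCongr ee.2).trans (Equiv.sumCompl (· ∈ T)))), by
          intro j
          by_cases hj : j ∈ S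
          · simp [Equiv.sumCompl_symm_apply_of_pos hj, hj, (ee.1 ⟨j, hj⟩).2]
          · simp [Equiv.sumCompl_symm_apply_of_neg hj, hj, (ee.2 ⟨j, hj⟩).2]⟩
      left_inv := fun σh => by
        ext j
        by_cases hj : j ∈ S
        · simp [Equiv.sumCompl_symm_apply_of_pos hj]
        · simp [Equiv.sumCompl_symm_apply_of_neg hj]
      right_inv := fun ee => by
        refine Prod.ext ?_ ?_
        · ext a
          simp [Equiv.sumCompl_symm_apply_of_pos a.2]
        · ext a
          simp [Equiv.sumCompl_symm_apply_of_neg a.2] }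
  rw [Fintype.card_congr e, Fintype.card_prod]
  have hS : Fintype.card {j // j ∈ S} = S.card := Fintype.card_coe S
  have hT : Fintype.card {i // i ∈ T} = T.card := Fintype.card_coe T
  have hSc : Fintype.card {j // j ∉ S} = n - S.card := by
    rw [Fintype.card_subtype_compl]
    simp [hS]
  have hTc : Fintype.card {i // i ∉ T} = n - T.card := by
    rw [Fintype.card_subtype_compl]
    simp [hT]
  have e1 : {j // j ∈ S} ≃ {i // i ∈ T} := Fintype.equivOfCardEq (by rw [hS, hT, hST])
  have e2 : {j // j ∉ S} ≃ {i // i ∉ T} := Fintype.equivOfCardEq (by rw [hSc, hTc, hST])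
  rw [Fintype.card_equiv e1, Fintype.card_equiv e2, hS, hSc]


lemma mixedDet_eq (A B : Matrix (Fin n) (Fin n) ℂ) (k : ℕ) (hk : k ≤ n) :
    mixedDet (fun i : Fin n => if (i : ℕ) < k then A else B)
      = ((k.factorial * (n - k).factorial : ℕ) : ℂ) / (n.factorial : ℂ)
          * ∑ S ∈ Finset.powersetCard k Finset.univ, det (mixCol A B S) := by
  classical
  unfold mixedDet
  have hmat : ∀ σ : Equiv.Perm (Fin n),
      (Matrix.of fun i j => (if ((σ j : ℕ) < k) then A else B) i j)
        = mixCol A B (Finset.univ.filter fun j => ((σ j : ℕ) < k)) := by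
    intro σ; ext i j; by_cases h : ((σ j : ℕ) < k) <;> simp [mixCol, h]
  simp only [hmat]
  have hcard : ∀ σ : Equiv.Perm (Fin n),
      (Finset.univ.filter fun j => ((σ j : ℕ) < k)).card = k := by
    intro σ
    have hb : (Finset.univ.filter fun j => ((σ j : ℕ) < k)).card
        = (Finset.univ.filter fun i : Fin n => ((i : ℕ) < k)).card := by
      apply Finset.card_bij' (fun j _ => σ j) (fun i _ => σ.symm i) <;> simp
    rw [hb, card_filter_lt (n := n) k hk]
  have hmaps : ∀ σ : Equiv.Perm (Fin n), σ ∈ Finset.univ →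
      (Finset.univ.filter fun j => ((σ j : ℕ) < k)) ∈ Finset.powersetCard k Finset.univ := by
    intro σ _
    rw [Finset.mem_powersetCard]
    exact ⟨Finset.subset_univ _, hcard σ⟩
  rw [← Finset.sum_fiberwise_of_maps_to hmaps
    (fun σ => det (mixCol A B (Finset.univ.filter fun j => ((σ j : ℕ) < k))))]
  have inner : ∀ S ∈ Finset.powersetCard k Finset.univ,
      ∑ σ ∈ Finset.univ.filter
          (fun σ : Equiv.Perm (Fin n) =>
            (Finset.univ.filter fun j => ((σ j : ℕ) < k)) = S),
        det (mixCol A B (Finset.univ.filter fun j => ((σ j : ℕ) < k)))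
      = (k.factorial * (n - k).factorial : ℕ) * det (mixCol A B S) := by
    intro S hS
    have hScard : S.card = k := (Finset.mem_powersetCard.mp hS).2
    have hfilter : (Finset.univ.filter
          (fun σ : Equiv.Perm (Fin n) =>
            (Finset.univ.filter fun j => ((σ j : ℕ) < k)) = S))
        = (Finset.univ.filter fun σ : Equiv.Perm (Fin n) =>
            ∀ j, σ j ∈ (Finset.univ.filter fun i : Fin n => ((i : ℕ) < k)) ↔ j ∈ S) := by
      apply Finset.filter_congr
      intro σ _
      rw [Finset.ext_iff]
      simp
    rw [Finset.sum_congr rfl (fun σ hσ => by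
      rw [(Finset.mem_filter.mp hσ).2]), Finset.sum_const, hfilter,
      fiber_card S _ (by rw [hScard, card_filter_lt k hk]), hScard]
    simp [nsmul_eq_mul]
  rw [Finset.sum_congr rfl inner, ← Finset.mul_sum]
  rw [← mul_assoc]
  congr 1
  rw [div_eq_mul_inv, mul_comm]


lemma posdef_conj {A C : Matrix (Fin n) (Fin n) ℂ} (hA : A.PosDef) (hC : IsUnit C) :
    (Cᴴ * A * C).PosDef := by
  constructor
  · exact isHermitian_conjTranspose_mul_mul C hA.1
  · exact (hA.conjTranspose_mul_mul_same (Matrix.mulVec_injective_iff_isUnit.mpr hC)).2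

open scoped MatrixOrder in
lemma det_factor (A B : Matrix (Fin n) (Fin n) ℂ) (hA : A.PosDef) (hB : B.PosDef) :
    ∃ μ : Fin n → ℝ, (∀ i, 0 < μ i) ∧
      ∀ x : ℝ, det ((x : ℂ) • A + B) = det B * ∏ i, ((x : ℂ) * (μ i : ℂ) + 1) := by
  classical
  set C := CFC.sqrt B with hCdef
  have hC : C.PosSemidef := (CFC.sqrt_nonneg B).posSemidef
  have hCH : Cᴴ = C := hC.1
  have hCC : C * C = B := CFC.sqrt_mul_sqrt_self B hB.posSemidef.nonneg
  have hdB : det B ≠ 0 := hB.det_pos.ne'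
  have hdC : det C ≠ 0 := by
    intro h
    apply hdB
    rw [← hCC, det_mul, h, zero_mul]
  have hCu : IsUnit C := (isUnit_iff_isUnit_det C).mpr hdC.isUnit
  have hCinv : C * C⁻¹ = 1 := mul_nonsing_inv C hdC.isUnit
  have hCinv' : C⁻¹ * C = 1 := nonsing_inv_mul C hdC.isUnit
  set M := C⁻¹ * A * C⁻¹ with hMdef
  have hMpd : M.PosDef := by
    have h1 : M = (C⁻¹)ᴴ * A * C⁻¹ := by rw [conjTranspose_nonsing_inv, hCH]
    rw [h1]
    exact posdef_conj hA (isUnit_nonsing_inv_iff.mpr hCu)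
  refine ⟨hMpd.1.eigenvalues, hMpd.eigenvalues_pos, fun x => ?_⟩
  have hfac : (x : ℂ) • A + B = C * ((x : ℂ) • M + 1) * C := by
    symm
    have hCMC : C * M * C = A := by
      rw [hMdef]
      calc C * (C⁻¹ * A * C⁻¹) * C = (C * C⁻¹) * A * (C⁻¹ * C) := by
            simp only [Matrix.mul_assoc]
        _ = A := by rw [hCinv, hCinv', Matrix.one_mul, Matrix.mul_one]
    calc C * ((x : ℂ) • M + 1) * C
        = C * ((x : ℂ) • M) * C + C * 1 * C := by
          rw [Matrix.mul_add, Matrix.add_mul]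
      _ = (x : ℂ) • (C * M * C) + C * C := by
          rw [Matrix.mul_smul, Matrix.smul_mul, Matrix.mul_one]
      _ = (x : ℂ) • A + B := by rw [hCMC, hCC]
  rw [hfac, det_mul, det_mul]
  have hdetmid : det ((x : ℂ) • M + 1) = ∏ i, ((x : ℂ) * (hMpd.1.eigenvalues i : ℂ) + 1) := by
    set U : Matrix (Fin n) (Fin n) ℂ := (hMpd.1.eigenvectorUnitary : Matrix (Fin n) (Fin n) ℂ)
      with hUdef
    set D : Matrix (Fin n) (Fin n) ℂ :=
      diagonal (RCLike.ofReal ∘ hMpd.1.eigenvalues) with hDdef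
    have hU : U * star U = 1 := mem_unitaryGroup_iff.mp hMpd.1.eigenvectorUnitary.2
    have hspec : M = U * D * star U := hMpd.1.spectral_theorem
    have h2 : (x : ℂ) • M + 1 = U * ((x : ℂ) • D + 1) * star U := by
      symm
      calc U * ((x : ℂ) • D + 1) * star U
          = U * ((x : ℂ) • D) * star U + U * 1 * star U := by
            rw [Matrix.mul_add, Matrix.add_mul]
        _ = (x : ℂ) • (U * D * star U) + U * star U := by
            rw [Matrix.mul_smul, Matrix.smul_mul, Matrix.mul_one]
        _ = (x : ℂ) • M + 1 := by rw [← hspec, hU]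
    rw [h2, det_mul_right_comm, hU, Matrix.one_mul]
    have h3 : (x : ℂ) • D + 1 = diagonal (fun i => (x : ℂ) * (hMpd.1.eigenvalues i : ℂ) + 1) := by
      rw [hDdef]
      ext i j
      by_cases h : i = j <;>
        simp [Matrix.one_apply, Matrix.diagonal_apply, h, Function.comp]
    rw [h3, det_diagonal]
  rw [hdetmid, ← hCC, det_mul]
  ring


lemma coeff_ident (N : ℕ) (c d : ℕ → ℂ)
    (h : ∀ x : ℝ, ∑ j ∈ Finset.range N, c j * (x : ℂ) ^ j
      = ∑ j ∈ Finset.range N, d j * (x : ℂ) ^ j) :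
    ∀ j ∈ Finset.range N, c j = d j := by
  classical
  set P : Polynomial ℂ := ∑ j ∈ Finset.range N, Polynomial.C (c j) * Polynomial.X ^ j with hP
  set Q : Polynomial ℂ := ∑ j ∈ Finset.range N, Polynomial.C (d j) * Polynomial.X ^ j with hQ
  have heval : ∀ x : ℝ, P.eval (x : ℂ) = Q.eval (x : ℂ) := by
    intro x
    rw [hP, hQ, Polynomial.eval_finset_sum, Polynomial.eval_finset_sum]
    simpa using h x
  have hPQ : P = Q := by
    apply Polynomial.eq_of_infinite_eval_eq
    exact Set.infinite_of_injective_forall_mem (f := fun x : ℝ => (x : ℂ))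
      (fun a b hab => Complex.ofReal_injective hab) (fun x => heval x)
  intro j hj
  have := congrArg (fun r => Polynomial.coeff r j) hPQ
  simpa [hP, hQ, Polynomial.finset_sum_coeff, Polynomial.coeff_C_mul,
    Polynomial.coeff_X_pow, Finset.sum_ite_eq' (Finset.range N) j, Finset.mem_range.mp hj,
    hj] using this


end Stmt16Aux

open Stmt16Aux

/-- for positive definite Hermitian `A, B`, the mixed determinants
`a_k = D(A^{[k]}, B^{[n-k]})` form a log-concave sequence: `a_k² ≥ a_{k-1} a_{k+1}`. -/
theorem stmt16 (n : ℕ) (A B : Matrix (Fin n) (Fin n) ℂ) (hA : A.PosDef) (hB : B.PosDef) :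
    let a : ℕ → ℝ := fun k =>
      (mixedDet (fun i : Fin n => if (i : ℕ) < k then A else B)).re
    ∀ k, 1 ≤ k → k + 1 ≤ n → a (k - 1) * a (k + 1) ≤ a k ^ 2 := by
  classical
  intro a k hk1 hkn
  obtain ⟨μ, hμpos, hfac⟩ := det_factor A B hA hB
  set μl : List ℝ := List.ofFn μ with hμl
  have hμllen : μl.length = n := by simp [hμl]
  have hμlpos : ∀ x ∈ μl, 0 < x := by
    intro x hx
    rw [hμl, List.mem_ofFn] at hx
    obtain ⟨i, rfl⟩ := hx
    exact hμpos i
  -- the coefficients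
  set c : ℕ → ℂ := fun j => ∑ S ∈ Finset.powersetCard j Finset.univ, det (mixCol A B S)
    with hc
  have hr : 0 < det B := hB.det_pos
  have him : (det B).im = 0 := by
    have := hr
    rw [Complex.lt_def] at this
    exact this.2.symm
  set r : ℝ := (det B).re with hrdef
  have hBr : det B = (r : ℂ) := by
    apply Complex.ext <;> simp [him, hrdef]
  have hrpos : 0 < r := by
    rw [Complex.lt_def] at hr
    simpa using hr.1
  -- identify coefficients
  have hident : ∀ j ∈ Finset.range (n+1), c j = (r : ℂ) * ((esym μl j : ℝ) : ℂ) := by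
    apply coeff_ident
    intro x
    have hper : ∀ j, ∑ S ∈ Finset.powersetCard j (Finset.univ : Finset (Fin n)),
        (x : ℂ) ^ S.card * det (mixCol A B S) = c j * (x : ℂ) ^ j := by
      intro j
      rw [Finset.sum_congr rfl (fun S hS =>
        by rw [(Finset.mem_powersetCard.mp hS).2]), ← Finset.mul_sum]
      simp only [hc]
      ring
    have h1 : ∑ j ∈ Finset.range (n+1), c j * (x : ℂ) ^ j = det ((x : ℂ) • A + B) := by
      rw [det_smul_add_expand A B (x : ℂ)]
      rw [← Finset.powerset_univ, Finset.sum_powerset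
        (f := fun S => (x:ℂ) ^ S.card * det (mixCol A B S))]
      rw [Finset.card_univ, Fintype.card_fin]
      exact (Finset.sum_congr rfl fun j _ => (hper j)).symm
    have h2 : det ((x : ℂ) • A + B) = ∑ j ∈ Finset.range (n+1),
        ((r : ℂ) * ((esym μl j : ℝ) : ℂ)) * (x : ℂ) ^ j := by
      rw [hfac x, hBr]
      have h3 : ∏ i, ((x : ℂ) * (μ i : ℂ) + 1)
          = (((μl.map (fun a => x * a + 1)).prod : ℝ) : ℂ) := by
        rw [hμl, List.map_ofFn, List.prod_ofFn]
        push_cast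
        exact Finset.prod_congr rfl (fun i _ => by simp [Function.comp])
      rw [h3, esym_prod x μl, hμllen]
      push_cast
      rw [Finset.mul_sum]
      exact Finset.sum_congr rfl fun i _ => by ring
    rw [h1, h2]
  -- value of a
  have haval : ∀ j, j ≤ n → a j = r * p μl j := by
    intro j hj
    have h4 := mixedDet_eq A B j hj
    have h5 : c j = (r : ℂ) * ((esym μl j : ℝ) : ℂ) :=
      hident j (Finset.mem_range.mpr (by omega))
    show (mixedDet _).re = _
    rw [h4]
    have hcj : (∑ S ∈ Finset.powersetCard j Finset.univ, det (mixCol A B S)) = c j := rfl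
    rw [hcj, h5]
    have h6 : ((j.factorial * (n - j).factorial : ℕ) : ℂ) / (n.factorial : ℂ)
        * ((r : ℂ) * ((esym μl j : ℝ) : ℂ))
        = (((j.factorial * (n - j).factorial : ℝ) / (n.factorial : ℝ)
            * (r * esym μl j) : ℝ) : ℂ) := by
      push_cast
      ring
    rw [h6, Complex.ofReal_re]
    have h7 : ((j.factorial * (n - j).factorial : ℝ)) / (n.factorial : ℝ)
        = ((n.choose j : ℝ))⁻¹ := by
      have h8 : (n.choose j) * j.factorial * (n - j).factorial = n.factorial :=
        Nat.choose_mul_factorial_mul_factorial hj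
      have h9 : (0:ℝ) < (n.factorial : ℝ) := by exact_mod_cast n.factorial_pos
      have h10 : (0:ℝ) < (n.choose j : ℝ) := by exact_mod_cast Nat.choose_pos hj
      have h11 : ((n.choose j : ℝ)) * (j.factorial : ℝ) * ((n - j).factorial : ℝ)
          = (n.factorial : ℝ) := by exact_mod_cast congrArg (Nat.cast : ℕ → ℝ) h8
      field_simp
      linear_combination h11
    rw [h7, p, hμllen]
    ring
  -- finish with Newton's inequality
  have hN := newton μl hμlpos (k - 1)
  rw [show k - 1 + 1 = k from by omega, show k - 1 + 2 = k + 1 from by omega] at hN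
  have hmul := mul_le_mul_of_nonneg_left hN (mul_self_nonneg r)
  calc a (k-1) * a (k+1) = r * r * (p μl (k-1) * p μl (k+1)) := by
        rw [haval (k-1) (by omega), haval (k+1) (by omega)]; ring
    _ ≤ r * r * (p μl k ^ 2) := hmul
    _ = a k ^ 2 := by rw [haval k (by omega)]; ring
end

section
/- Let V be a finite-dimensional complex vector space with Hermitian form Q and η with Q(η,η) > 0. Suppose V = (⊕_{s=1}^{p} V_s) ⊕ ℂη is a Q-orthogonal decomposition such that (−1)^s Q is positive semidefinite on each V_s and definite on each V_s. If some V_s with s even is nonzero, then there exists γ ∈ V with Q(η,γ)·conj(Q(η,γ)) < Q(η,η)·Q(γ,γ). -/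
/-- if a Hermitian form `Q` with `Q(η,η) > 0` admits a `Q`-orthogonal
decomposition `V = (⊕_{s=1}^p V_s) ⊕ ℂη` with `(-1)^s Q` positive definite on each
`V_s`, and some `V_s` with `s` even is nonzero, then there is `γ` violating the
Khovanskii–Teissier inequality: `Q(η,γ) conj(Q(η,γ)) < Q(η,η) Q(γ,γ)`. -/
theorem stmt18 (V : Type*) [AddCommGroup V] [Module ℂ V] [FiniteDimensional ℂ V]
    (Q : V →ₗ⋆[ℂ] V →ₗ[ℂ] ℂ) (hherm : ∀ x y, (starRingEnd ℂ) (Q x y) = Q y x)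
    (η : V) (hη : 0 < (Q η η).re)
    (p : ℕ) (W : ℕ → Submodule ℂ V)
    (horthW : ∀ s t, 1 ≤ s → s ≤ p → 1 ≤ t → t ≤ p → s ≠ t →
      ∀ v ∈ W s, ∀ w ∈ W t, Q v w = 0)
    (horthη : ∀ s, 1 ≤ s → s ≤ p → ∀ v ∈ W s, Q η v = 0)
    (hdef : ∀ s, 1 ≤ s → s ≤ p → ∀ v ∈ W s, v ≠ 0 → 0 < (((-1 : ℂ) ^ s) * Q v v).re)
    (hspan : (⨆ s ∈ Set.Icc 1 p, W s) ⊔ Submodule.span ℂ {η} = ⊤)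
    (hnonzero : ∃ s, 1 ≤ s ∧ s ≤ p ∧ Even s ∧ W s ≠ ⊥) :
    ∃ γ : V, (Q η γ * (starRingEnd ℂ) (Q η γ)).re < (Q η η * Q γ γ).re := by
  obtain ⟨s, hs1, hsp, hse, hW⟩ := hnonzero
  rw [Submodule.ne_bot_iff] at hW
  obtain ⟨β, hβW, hβ0⟩ := hW
  have hQηβ : Q η β = 0 := horthη s hs1 hsp β hβW
  have hQβη : Q β η = 0 := by rw [← hherm η β, hQηβ, map_zero]
  have hpos : 0 < (Q β β).re := by
    have := hdef s hs1 hsp β hβW hβ0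
    rwa [hse.neg_one_pow, one_mul] at this
  have haim : (Q η η).im = 0 := Complex.conj_eq_iff_im.mp (hherm η η)
  use η + β
  have h1 : Q η (η + β) = Q η η := by simp [map_add, hQηβ]
  have h2 : Q (η + β) (η + β) = Q η η + Q β β := by
    simp [map_add, hQηβ, hQβη]
  rw [h1, h2]
  simp only [Complex.mul_re, Complex.add_re, Complex.add_im, Complex.conj_re,
    Complex.conj_im, haim]
  nlinarith [hη, hpos]
end
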